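/- Let k ≥ 1 and b be integers with b ≥ k − 1, and set α₀ = (−k, b) ∈ ℤ². Let v_1, …, v_n ∈ ℤ × ℤ be vectors each with first coordinate ≥ 1, define α_i = α_{i−1} + v_i, and suppose v_i ∧ α_{i−1} > 0 for every i = 1, …, n, where for u = (u₁,u₂) and v = (v₁,v₂) in ℤ² the wedge is u ∧ v := u₁v₂ − u₂v₁. If moreover n ≥ 1 or (k, b) ≠ (1, 0), then α_n ≠ (−1, 0). -/
import Mathlib


/-- Non-reachability of `(-1, 0)` from `(-k, b)` with `b ≥ k - 1`: interacting
with vectors `(a, b')`, `a ≥ 1`, under the positivity condition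
`v_i ∧ α_{i-1} > 0` (with `u ∧ v := u₁v₂ - u₂v₁`) can never produce `(-1, 0)`,
except in the trivial case `n = 0`, `(k, b) = (1, 0)`. -/
theorem not_reachable (k b : ℤ) (hk : 1 ≤ k) (hb : k - 1 ≤ b)
    (n : ℕ) (α : ℕ → ℤ × ℤ) (v : ℕ → ℤ × ℤ)
    (h0 : α 0 = (-k, b))
    (hv : ∀ i < n, 1 ≤ (v i).1)
    (hstep : ∀ i < n, α (i + 1) = α i + v i)
    (hwedge : ∀ i < n, 0 < (v i).1 * (α i).2 - (v i).2 * (α i).1)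
    (hnontriv : 1 ≤ n ∨ (k, b) ≠ (1, 0)) :
    α n ≠ (-1, 0) := by
  intro hα
  rcases Nat.eq_zero_or_pos n with hn | hn
  · subst hn
    rw [h0] at hα
    have hk1 : k = 1 := by have := congrArg Prod.fst hα; simp at this; omega
    have hb0 : b = 0 := by have := congrArg Prod.snd hα; simpa using this
    rcases hnontriv with h | h
    · omega
    · exact h (by rw [hk1, hb0])
  -- all states up to n have first coordinate ≤ -1
  have haux : ∀ j, j ≤ n → (α (n - j)).1 ≤ -1 := by
    intro j
    induction j with
    | zero => intro _; simp [hα]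
    | succ j ih =>
      intro hj
      have hjn : j ≤ n := by omega
      set i := n - (j + 1) with hi
      have hin : i < n := by omega
      have hsucc : i + 1 = n - j := by omega
      have h1 : (α (i + 1)).1 ≤ -1 := by rw [hsucc]; exact ih hjn
      have h2 : α (i + 1) = α i + v i := hstep i hin
      have h3 : (α (i + 1)).1 = (α i).1 + (v i).1 := by rw [h2]; rfl
      have h4 := hv i hin
      omega
  have hx : ∀ i, i ≤ n → (α i).1 ≤ -1 := by
    intro i hi
    have := haux (n - i) (by omega)
    rwa [Nat.sub_sub_self hi] at this
  -- the invariant s = x + y + 1 ≥ 0 holds along the chain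
  have hs : ∀ i, i ≤ n → 0 ≤ (α i).1 + (α i).2 + 1 := by
    intro i
    induction i with
    | zero => intro _; rw [h0]; simp; omega
    | succ i ih =>
      intro hi
      have hin : i < n := by omega
      have hIH := ih (by omega)
      have h2 : α (i + 1) = α i + v i := hstep i hin
      have h3 : (α (i + 1)).1 = (α i).1 + (v i).1 := by rw [h2]; rfl
      have h4 : (α (i + 1)).2 = (α i).2 + (v i).2 := by rw [h2]; rfl
      have h5 := hv i hin
      have h6 := hwedge i hin
      have h7 : (α (i + 1)).1 ≤ -1 := hx (i + 1) hi
      rw [h3, h4]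
      rw [h3] at h7
      set x := (α i).1
      set y := (α i).2
      set a := (v i).1
      set c := (v i).2
      -- 0 ≤ x + y + 1, x + a ≤ -1, 1 ≤ a, 0 < a*y - c*x ⊢ 0 ≤ x + a + (y + c) + 1
      nlinarith [mul_nonneg (by linarith : (0:ℤ) ≤ x + y + 1) (by linarith : (0:ℤ) ≤ -x - a - 1),
        mul_nonneg (by linarith : (0:ℤ) ≤ a - 1) (by linarith : (0:ℤ) ≤ -x - a - 1),
        mul_pos (by linarith : (0:ℤ) < a) (by linarith : (0:ℤ) < -x)]
  -- derive contradiction at step n-1 → n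
  set m := n - 1 with hm
  have hmn : m < n := by omega
  have h2 : α (m + 1) = α m + v m := hstep m hmn
  have hmn1 : m + 1 = n := by omega
  rw [hmn1, hα] at h2
  have hx' : (α m).1 = -1 - (v m).1 := by
    have := congrArg Prod.fst h2; simp [Prod.fst_add] at this; linarith
  have hy' : (α m).2 = -(v m).2 := by
    have := congrArg Prod.snd h2; simp [Prod.snd_add] at this; linarith
  have h6 := hwedge m hmn
  rw [hx', hy'] at h6
  have hc : 0 < (v m).2 := by nlinarith
  have h5 := hv m hmn
  have hsm := hs m (by omega)
  rw [hx', hy'] at hsm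
  linarith
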